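/- Theorem (ALSO-X# is better than its weak variant ALSO-X#-underline). For every t ∈ ℝ the following holds: if there exists a minimizer (x̄, β̄) of C over F_t × ℝ (i.e., with β unconstrained) such that x̄ is feasible, then for every minimizer (x̂, β̂) of C over F_t × (−∞, 0], the point x̂ is feasible. -/

import Mathlib

open MeasureTheory

/-- **ALSO-X# is better than its weak variant ALSO-X#-underline.**
If the lower-level ALSO-X#-underline problem (with `β` unconstrained) has a minimizer whose
`x`-component is feasible, then every minimizer of the lower-level ALSO-X# problem (with the
constraint `β ≤ 0`) has a feasible `x`-component. -/
theorem alsoxSharp_better_than_weak_alsoxSharp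
    (n m I : ℕ) (hn : 1 ≤ n) (hm : 1 ≤ m) (hI : 1 ≤ I)
    (c : Fin n → ℝ) (X : Set (Fin n → ℝ))
    (ε : ℝ) (hε : ε ∈ Set.Ioo (0 : ℝ) 1)
    (θ : ℝ) (hθ : 0 ≤ θ)
    -- `N` is a norm on ℝᵐ (playing the role of the dual norm)
    (N : (Fin m → ℝ) → ℝ)
    (hN_tri : ∀ v w, N (v + w) ≤ N v + N w)
    (hN_smul : ∀ (r : ℝ) (v), N (r • v) = |r| * N v)
    (hN_def : ∀ v, N v = 0 → v = 0)
    -- affine maps `a i : ℝⁿ → ℝᵐ`, `b i : ℝⁿ → ℝ`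
    (a : Fin I → ((Fin n → ℝ) →ᵃ[ℝ] (Fin m → ℝ)))
    (b : Fin I → ((Fin n → ℝ) →ᵃ[ℝ] ℝ))
    -- reference distribution
    (P : Measure (Fin m → ℝ)) [IsProbabilityMeasure P]
    (hint : ∀ x : Fin n → ℝ,
      Integrable (fun ζ => ⨆ i : Fin I, |∑ k, a i x k * ζ k|) P)
    -- `f x ζ = max_i (θ N(aᵢ(x)) + aᵢ(x)ᵀζ - bᵢ(x))`
    (f : (Fin n → ℝ) → (Fin m → ℝ) → ℝ)
    (hf : ∀ x ζ, f x ζ = ⨆ i : Fin I, (θ * N (a i x) + ∑ k, a i x k * ζ k - b i x))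
    -- feasibility for the distributionally robust chance constraint
    (feasible : (Fin n → ℝ) → Prop)
    (hfeas : ∀ x, feasible x ↔ 1 - ε ≤ (P {ζ | f x ζ ≤ 0}).toReal)
    -- `F t = {x ∈ X : cᵀx ≤ t}`
    (F : ℝ → Set (Fin n → ℝ))
    (hF : ∀ t, F t = {x ∈ X | ∑ k, c k * x k ≤ t})
    -- hinge loss (lower-level ALSO-X objective)
    (H : (Fin n → ℝ) → ℝ)
    (hH : ∀ x, H x = ∫ ζ, max (f x ζ) 0 ∂P)
    -- CVaR loss (lower-level ALSO-X# / ALSO-X#-underline objective)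
    (C : (Fin n → ℝ) → ℝ → ℝ)
    (hC : ∀ x β, C x β = ε * β + ∫ ζ, max (f x ζ - β) 0 ∂P) :
    ∀ t : ℝ,
      (∃ xbar : Fin n → ℝ, ∃ βbar : ℝ, (xbar, βbar) ∈ F t ×ˢ (Set.univ : Set ℝ) ∧
        IsMinOn (fun q : (Fin n → ℝ) × ℝ => C q.1 q.2) (F t ×ˢ (Set.univ : Set ℝ)) (xbar, βbar) ∧
        feasible xbar) →
      ∀ (xhat : Fin n → ℝ) (βhat : ℝ), (xhat, βhat) ∈ F t ×ˢ Set.Iic (0 : ℝ) →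
        IsMinOn (fun q : (Fin n → ℝ) × ℝ => C q.1 q.2) (F t ×ˢ Set.Iic (0 : ℝ)) (xhat, βhat) →
        feasible xhat := by
  haveI hIne : Nonempty (Fin I) := ⟨⟨0, hI⟩⟩
  -- measurability of f x
  have hmeas : ∀ x, Measurable (f x) := by
    intro x
    have h1 : Measurable (Finset.univ.sup' (Finset.univ_nonempty (α := Fin I))
        (fun i (ζ : Fin m → ℝ) => θ * N (a i x) + ∑ k, a i x k * ζ k - b i x)) :=
      Finset.measurable_sup' _ fun i _ =>
        (measurable_const.add (Finset.measurable_sum Finset.univ fun k _ =>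
          (measurable_pi_apply k).const_mul _)).sub measurable_const
    have h2 : f x = Finset.univ.sup' Finset.univ_nonempty
        (fun i (ζ : Fin m → ℝ) => θ * N (a i x) + ∑ k, a i x k * ζ k - b i x) := by
      funext ζ
      rw [hf x ζ, ← Finset.sup'_univ_eq_ciSup, Finset.sup'_apply]
    rw [h2]; exact h1
  -- pointwise bound on |f x ζ|
  have hbound : ∀ x ζ, |f x ζ| ≤ (⨆ i, |∑ k, a i x k * ζ k|) + (⨆ i, |θ * N (a i x) - b i x|) := by
    intro x ζ
    set A := (⨆ i, |∑ k, a i x k * ζ k|) with hA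
    set B := (⨆ i, |θ * N (a i x) - b i x|) with hB
    have hbdd1 : BddAbove (Set.range fun i : Fin I => |∑ k, a i x k * ζ k|) :=
      Set.Finite.bddAbove (Set.finite_range _)
    have hbdd2 : BddAbove (Set.range fun i : Fin I => |θ * N (a i x) - b i x|) :=
      Set.Finite.bddAbove (Set.finite_range _)
    have hterm : ∀ i : Fin I, |θ * N (a i x) + ∑ k, a i x k * ζ k - b i x| ≤ A + B := by
      intro i
      have heq : θ * N (a i x) + ∑ k, a i x k * ζ k - b i x
          = (∑ k, a i x k * ζ k) + (θ * N (a i x) - b i x) := by ring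
      rw [heq]
      exact (abs_add_le _ _).trans (add_le_add (le_ciSup hbdd1 i) (le_ciSup hbdd2 i))
    rw [hf x, abs_le]
    constructor
    · obtain ⟨i0⟩ := hIne
      refine le_trans ?_ (le_ciSup (Set.Finite.bddAbove (Set.finite_range _)) i0)
      have := hterm i0
      have h2 := neg_abs_le (θ * N (a i0 x) + ∑ k, a i0 x k * ζ k - b i0 x)
      linarith
    · exact ciSup_le fun i => (le_abs_self _).trans (hterm i)
  -- integrability of f x
  have hintf : ∀ x, Integrable (f x) P := by
    intro x
    refine ((hint x).add (integrable_const (⨆ i, |θ * N (a i x) - b i x|))).mono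
      (hmeas x).aestronglyMeasurable (ae_of_all _ fun ζ => ?_)
    rw [Real.norm_eq_abs, Real.norm_eq_abs]
    exact (hbound x ζ).trans (le_abs_self _)
  -- integrability of the hinge integrands
  have hintu : ∀ x (β : ℝ), Integrable (fun ζ => max (f x ζ - β) 0) P := by
    intro x β
    refine ((hintf x).abs.add (integrable_const |β|)).mono
      ((((hmeas x).sub measurable_const).max measurable_const).aestronglyMeasurable)
      (ae_of_all _ fun ζ => ?_)
    rw [Real.norm_eq_abs, Real.norm_eq_abs, abs_of_nonneg (le_max_right _ _)]
    have h1 : f x ζ - β ≤ |f x ζ| + |β| := by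
      have := abs_sub (f x ζ) β
      have := le_abs_self (f x ζ - β)
      linarith
    have h2 : (0 : ℝ) ≤ |f x ζ| + |β| := by positivity
    exact (max_le h1 h2).trans (le_abs_self _)
  have hms : ∀ x (r : ℝ), MeasurableSet {ζ | r < f x ζ} := fun x r =>
    measurableSet_lt measurable_const (hmeas x)
  -- feasibility restated
  have hfeas' : ∀ x, feasible x ↔ (P {ζ | 0 < f x ζ}).toReal ≤ ε := by
    intro x
    rw [hfeas x]
    have hset : {ζ | f x ζ ≤ 0} = {ζ | 0 < f x ζ}ᶜ := by
      ext ζ; simp [not_lt]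
    rw [hset, measure_compl (hms x 0) (measure_ne_top P _), measure_univ,
      ENNReal.toReal_sub_of_le prob_le_one ENNReal.one_ne_top, ENNReal.toReal_one]
    constructor <;> intro h <;> linarith
  -- optimality in β gives a tail bound
  have hstep : ∀ x (β s : ℝ), 0 < s → C x β ≤ C x (β + s) →
      (P {ζ | β + s < f x ζ}).toReal ≤ ε := by
    intro x β s hs hle
    have hind : Integrable (({ζ | β + s < f x ζ}).indicator (fun _ => s)) P :=
      (integrable_const s).indicator (hms x (β + s))
    have hptw : ∀ ζ, ({ζ | β + s < f x ζ}).indicator (fun _ => s) ζ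
        ≤ max (f x ζ - β) 0 - max (f x ζ - (β + s)) 0 := by
      intro ζ
      by_cases hζ : ζ ∈ {ζ | β + s < f x ζ}
      · rw [Set.indicator_of_mem hζ]
        have h1 : β + s < f x ζ := hζ
        rw [max_eq_left (by linarith), max_eq_left (by linarith)]
        linarith
      · rw [Set.indicator_of_notMem hζ]
        have : max (f x ζ - (β + s)) 0 ≤ max (f x ζ - β) 0 :=
          max_le_max (by linarith) le_rfl
        linarith
    have hI1 : ∫ ζ, ({ζ | β + s < f x ζ}).indicator (fun _ => s) ζ ∂P
        ≤ ∫ ζ, (max (f x ζ - β) 0 - max (f x ζ - (β + s)) 0) ∂P :=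
      integral_mono hind ((hintu x β).sub (hintu x (β + s))) hptw
    rw [integral_indicator_const s (hms x (β + s)),
      integral_sub (hintu x β) (hintu x (β + s)), smul_eq_mul, measureReal_def] at hI1
    rw [hC x β, hC x (β + s)] at hle
    have hps : (P {ζ | β + s < f x ζ}).toReal * s ≤ ε * s := by nlinarith
    exact le_of_mul_le_mul_right (by linarith) hs
  -- for feasible x, C x 0 ≤ C x β when β ≥ 0
  have hstep2 : ∀ x (β : ℝ), 0 ≤ β → (P {ζ | 0 < f x ζ}).toReal ≤ ε → C x 0 ≤ C x β := by
    intro x β hβ hp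
    rw [hC x 0, hC x β]
    have hindI : Integrable (({ζ | 0 < f x ζ}).indicator (fun _ => β)) P :=
      (integrable_const β).indicator (hms x 0)
    have hptw : ∀ ζ, max (f x ζ - 0) 0
        ≤ max (f x ζ - β) 0 + ({ζ | 0 < f x ζ}).indicator (fun _ => β) ζ := by
      intro ζ
      by_cases hζ : ζ ∈ {ζ | 0 < f x ζ}
      · rw [Set.indicator_of_mem hζ]
        have h1 : 0 < f x ζ := hζ
        rw [sub_zero, max_eq_left h1.le]
        have := le_max_left (f x ζ - β) 0
        linarith
      · rw [Set.indicator_of_notMem hζ]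
        have h1 : f x ζ ≤ 0 := not_lt.mp hζ
        rw [sub_zero, max_eq_right h1]
        have := le_max_right (f x ζ - β) 0
        linarith
    have hI1 : ∫ ζ, max (f x ζ - 0) 0 ∂P
        ≤ ∫ ζ, (max (f x ζ - β) 0 + ({ζ | 0 < f x ζ}).indicator (fun _ => β) ζ) ∂P :=
      integral_mono (hintu x 0) ((hintu x β).add hindI) hptw
    rw [integral_add (hintu x β) hindI, integral_indicator_const β (hms x 0),
      smul_eq_mul, measureReal_def] at hI1
    have h2 : (P {ζ | 0 < f x ζ}).toReal * β ≤ ε * β := mul_le_mul_of_nonneg_right hp hβ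
    linarith
  -- main part
  rintro t ⟨xbar, βbar, hmemb, hminb, hfb⟩ xhat βhat hmemh hminh
  have hxbF : xbar ∈ F t := hmemb.1
  have hxhF : xhat ∈ F t := hmemh.1
  have hβh : βhat ≤ 0 := hmemh.2
  have hfb' : (P {ζ | 0 < f xbar ζ}).toReal ≤ ε := (hfeas' xbar).mp hfb
  have hA : ∀ β : ℝ, C xhat βhat ≤ C xhat β := by
    intro β
    have h1 : C xhat βhat ≤ C xbar βbar := by
      by_cases hb : βbar ≤ 0
      · exact isMinOn_iff.mp hminh (xbar, βbar) (Set.mem_prod.mpr ⟨hxbF, hb⟩)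
      · have h0 : C xhat βhat ≤ C xbar 0 :=
          isMinOn_iff.mp hminh (xbar, 0) (Set.mem_prod.mpr ⟨hxbF, Set.mem_Iic.mpr le_rfl⟩)
        exact h0.trans (hstep2 xbar βbar (le_of_not_ge hb) hfb')
    exact h1.trans (isMinOn_iff.mp hminb (xhat, β) (Set.mem_prod.mpr ⟨hxhF, trivial⟩))
  have hT : ∀ s : ℝ, 0 < s → (P {ζ | βhat + s < f xhat ζ}).toReal ≤ ε :=
    fun s hs => hstep xhat βhat s hs (hA (βhat + s))
  rw [hfeas' xhat]
  rcases lt_or_eq_of_le hβh with hlt | heq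
  · have h := hT (-βhat) (by linarith)
    have hz : βhat + -βhat = 0 := by ring
    rw [hz] at h
    exact h
  · subst heq
    have hU : {ζ | 0 < f xhat ζ} = ⋃ n : ℕ, {ζ | 0 + 1 / ((n : ℝ) + 1) < f xhat ζ} := by
      ext ζ
      simp only [Set.mem_setOf_eq, Set.mem_iUnion, zero_add]
      constructor
      · intro h
        obtain ⟨nn, hn⟩ := exists_nat_one_div_lt h
        exact ⟨nn, hn⟩
      · rintro ⟨nn, hn⟩
        have : (0 : ℝ) < 1 / ((nn : ℝ) + 1) := by positivity
        linarith
    have hmono : Monotone fun n : ℕ => {ζ | 0 + 1 / ((n : ℝ) + 1) < f xhat ζ} := by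
      intro n k hnk ζ hζ
      simp only [Set.mem_setOf_eq, zero_add] at *
      have h1 : (1 : ℝ) / ((k : ℝ) + 1) ≤ 1 / ((n : ℝ) + 1) := by
        apply one_div_le_one_div_of_le (by positivity)
        have : (n : ℝ) ≤ (k : ℝ) := Nat.cast_le.mpr hnk
        linarith
      linarith
    rw [hU, hmono.directed_le.measure_iUnion]
    refine ENNReal.toReal_le_of_le_ofReal hε.1.le (iSup_le fun nn => ?_)
    have h := hT (1 / ((nn : ℝ) + 1)) (by positivity)
    exact (ENNReal.le_ofReal_iff_toReal_le (measure_ne_top P _) hε.1.le).mpr h
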